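/- Let u₀, u₁, u₂ ∈ ℝ² with u₀ + u₁ + u₂ = 0 and u₀, u₁ linearly independent, and suppose w₁ = u₁ - (u₀ᵀu₁)u₀ with |u₀| = 1. Then (1 + ((u₀ᵀu₁)² + u₀ᵀu₁)/|w₁|²)·u₀u₀ᵀ + ((1 + u₀ᵀu₁)/|w₁|²)·u₁u₁ᵀ + (−u₀ᵀu₁/|w₁|²)·u₂u₂ᵀ = I. -/

import Mathlib

open scoped RealInnerProductSpace

theorem gram_schmidt_identity_decomposition
    (u₀ u₁ u₂ : EuclideanSpace ℝ (Fin 2))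
    (hsum : u₀ + u₁ + u₂ = 0)
    (hind : LinearIndependent ℝ ![u₀, u₁])
    (w₁ : EuclideanSpace ℝ (Fin 2))
    (hw₁ : w₁ = u₁ - ⟪u₀, u₁⟫ • u₀)
    (hu₀ : ‖u₀‖ = 1) :
    (1 + (⟪u₀, u₁⟫ ^ 2 + ⟪u₀, u₁⟫) / ‖w₁‖ ^ 2) •
        Matrix.vecMulVec (u₀ : Fin 2 → ℝ) u₀ +
      ((1 + ⟪u₀, u₁⟫) / ‖w₁‖ ^ 2) • Matrix.vecMulVec (u₁ : Fin 2 → ℝ) u₁ +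
      (-⟪u₀, u₁⟫ / ‖w₁‖ ^ 2) • Matrix.vecMulVec (u₂ : Fin 2 → ℝ) u₂ =
      (1 : Matrix (Fin 2) (Fin 2) ℝ) := by
  have h1 : ⟪u₀, u₀⟫ = 1 := by
    rw [real_inner_self_eq_norm_sq, hu₀]; norm_num
  have ht : ⟪u₀, u₁⟫ = u₀ 0 * u₁ 0 + u₀ 1 * u₁ 1 := by
    simp [PiLp.inner_apply, Fin.sum_univ_two, RCLike.inner_apply]; ring
  have h1' : u₀ 0 ^ 2 + u₀ 1 ^ 2 = 1 := by
    have := h1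
    simp only [PiLp.inner_apply, Fin.sum_univ_two, RCLike.inner_apply, conj_trivial] at this
    nlinarith [this]
  have hw' : ∀ i, w₁ i = u₁ i - ⟪u₀, u₁⟫ * u₀ i := by
    intro i; rw [hw₁]; rfl
  have hN : ‖w₁‖ ^ 2 = w₁ 0 ^ 2 + w₁ 1 ^ 2 := by
    rw [← real_inner_self_eq_norm_sq]
    simp only [PiLp.inner_apply, Fin.sum_univ_two, RCLike.inner_apply, conj_trivial]
    ring
  have hn : ‖w₁‖ ^ 2 = u₁ 0 ^ 2 + u₁ 1 ^ 2 - ⟪u₀, u₁⟫ ^ 2 := by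
    rw [hN, hw' 0, hw' 1, ht]
    linear_combination ((u₀ 0 * u₁ 0 + u₀ 1 * u₁ 1) ^ 2) * h1'
  have hw0 : w₁ ≠ 0 := by
    intro h
    rw [hw₁, sub_eq_zero] at h
    have := (LinearIndependent.pair_iff.mp hind ⟪u₀, u₁⟫ (-1)
      (by rw [neg_one_smul, ← h, add_neg_cancel])).2
    norm_num at this
  have hD : ‖w₁‖ ^ 2 ≠ 0 := pow_ne_zero 2 (norm_ne_zero_iff.mpr hw0)
  have hD' : u₁ 0 ^ 2 + u₁ 1 ^ 2 - (u₀ 0 * u₁ 0 + u₀ 1 * u₁ 1) ^ 2 ≠ 0 := by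
    rw [← ht, ← hn]; exact hD
  have h2 : u₂ = -(u₀ + u₁) := eq_neg_of_add_eq_zero_right hsum
  have h2' : ∀ i, u₂ i = -(u₀ i + u₁ i) := by
    intro i; rw [h2]; rfl
  ext i j
  fin_cases i <;> fin_cases j <;>
    simp only [Matrix.add_apply, Matrix.smul_apply, Matrix.vecMulVec_apply,
      Matrix.one_apply, smul_eq_mul, hn, ht, h2'] <;>
    norm_num <;>
    field_simp
  · linear_combination (u₁ 1 ^ 2) * h1'
  · linear_combination (-(u₁ 0 * u₁ 1)) * h1'
  · linear_combination (-(u₁ 0 * u₁ 1)) * h1'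
  · linear_combination (u₁ 0 ^ 2) * h1'
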